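/- Let A be a finite nonempty alphabet, let C be a finite prefix code over A that is not a maximal prefix code, and let x = ⟨x₁, x₂, …⟩ ∈ A^ℕ. Then ∑_{c = ⟨c₁,…,c_n⟩ ∈ C} 2^{|{i ∈ {1,…,n} : c_i ≠ x_i}|} · (1/(2|A| − 1))^{len(c)} < 1. -/

import Mathlib

variable {A : Type*}

/-- A prefix code: no element is a (proper) prefix of another element. -/
def IsPrefixCode (C : Set (List A)) : Prop :=
  ∀ p ∈ C, ∀ q ∈ C, p <+: q → p = q

/-- A maximal prefix code: a prefix code not strictly contained in any prefix code. -/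
def IsMaximalPrefixCode (C : Set (List A)) : Prop :=
  IsPrefixCode C ∧ ∀ D : Set (List A), IsPrefixCode D → C ⊆ D → D = C

section Aux

variable [Fintype A] [DecidableEq A]

/-- per-letter weight -/
noncomputable def pw (x0 a : A) : ℝ :=
  if a = x0 then 1 / (2 * (Fintype.card A : ℝ) - 1)
  else 2 / (2 * (Fintype.card A : ℝ) - 1)

/-- weight of a word relative to a reference sequence -/
noncomputable def wgt (x : ℕ → A) : List A → ℝ
  | [] => 1
  | a :: t => pw (x 0) a * wgt (fun n => x (n + 1)) t

variable [Nonempty A]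

lemma card_pos_aux : (1 : ℝ) ≤ 2 * (Fintype.card A : ℝ) - 1 := by
  have : 1 ≤ Fintype.card A := Fintype.card_pos
  have : (1 : ℝ) ≤ (Fintype.card A : ℝ) := by exact_mod_cast this
  linarith

lemma pw_pos (x0 a : A) : 0 < pw x0 a := by
  have h := card_pos_aux (A := A)
  unfold pw
  split <;> positivity

lemma sum_pw (x0 : A) : ∑ a : A, pw x0 a = 1 := by
  have h := card_pos_aux (A := A)
  have hne : 2 * (Fintype.card A : ℝ) - 1 ≠ 0 := by linarith
  set r : ℝ := 1 / (2 * (Fintype.card A : ℝ) - 1) with hr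
  have hpw : ∀ a : A, pw x0 a = 2 * r - (if a = x0 then r else 0) := by
    intro a
    unfold pw
    split <;> simp [hr] <;> ring
  rw [Finset.sum_congr rfl fun a _ => hpw a, Finset.sum_sub_distrib,
    Finset.sum_const, Finset.sum_ite_eq' Finset.univ x0 (fun _ => r)]
  simp only [Finset.mem_univ, if_pos, Finset.card_univ, nsmul_eq_mul]
  field_simp [hr]
  have h1 : r * (2 * (Fintype.card A : ℝ) - 1) = 1 := by rw [hr]; exact one_div_mul_cancel hne
  linear_combination h1

lemma wgt_pos (x : ℕ → A) (c : List A) : 0 < wgt x c := by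
  induction c generalizing x with
  | nil => exact one_pos
  | cons a t ih => exact mul_pos (pw_pos _ _) (ih _)

lemma wgt_prod (x : ℕ → A) (c : List A) :
    wgt x c = ∏ i : Fin c.length, pw (x i.val) (c.get i) := by
  induction c generalizing x with
  | nil => simp [wgt]
  | cons a t ih =>
    simp only [wgt, ih, List.length_cons, Fin.prod_univ_succ]
    simp

lemma wgt_eq (x : ℕ → A) (c : List A) :
    wgt x c = (2 : ℝ) ^ (Finset.univ.filter fun i : Fin c.length =>
        c.get i ≠ x i.val).card *
      (1 / (2 * (Fintype.card A : ℝ) - 1)) ^ c.length := by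
  rw [wgt_prod]
  set r : ℝ := 1 / (2 * (Fintype.card A : ℝ) - 1) with hr
  have : ∀ i : Fin c.length, pw (x i.val) (c.get i) =
      (if c.get i ≠ x i.val then (2 : ℝ) else 1) * r := by
    intro i
    unfold pw
    by_cases h : c.get i = x i.val <;> simp [h, hr] <;> ring
  rw [Finset.prod_congr rfl fun i _ => this i, Finset.prod_mul_distrib,
    Finset.prod_const, Finset.prod_ite, Finset.prod_const, Finset.prod_const_one,
    mul_one, Finset.card_univ, Fintype.card_fin]

lemma kraft : ∀ (n : ℕ) (x : ℕ → A) (C : Finset (List A)),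
    IsPrefixCode (↑C : Set (List A)) → (∀ c ∈ C, c.length ≤ n) →
    ∑ c ∈ C, wgt x c ≤ 1 := by
  intro n
  induction n with
  | zero =>
    intro x C _ hlen
    have : C ⊆ {[]} := by
      intro c hc
      simp only [Finset.mem_singleton]
      exact List.length_eq_zero_iff.mp (Nat.le_zero.mp (hlen c hc))
    calc ∑ c ∈ C, wgt x c ≤ ∑ c ∈ ({[]} : Finset (List A)), wgt x c :=
          Finset.sum_le_sum_of_subset_of_nonneg this
            (fun c _ _ => (wgt_pos x c).le)
      _ = 1 := by simp [wgt]
  | succ n ih =>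
    intro x C hpc hlen
    letI : Inhabited A := Classical.inhabited_of_nonempty ‹_›
    by_cases hnil : ([] : List A) ∈ C
    · have : C = {[]} := by
        apply Finset.eq_singleton_iff_unique_mem.mpr
        refine ⟨hnil, fun c hc => ?_⟩
        exact (hpc [] hnil c hc (List.nil_prefix)).symm
      rw [this]
      simp [wgt]
    · have key : ∀ a : A,
          ∑ c ∈ C.filter (fun c => c.headI = a), wgt x c ≤ pw (x 0) a := by
        intro a
        set s := C.filter (fun c => c.headI = a) with hs
        have hcons : ∀ c ∈ s, c = a :: c.tail := by
          intro c hc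
          rw [hs, Finset.mem_filter] at hc
          obtain ⟨hcC, hh⟩ := hc
          have hne : c ≠ [] := fun h => hnil (h ▸ hcC)
          cases c with
          | nil => exact absurd rfl hne
          | cons b t => simpa using hh ▸ rfl
        have step1 : ∑ c ∈ s, wgt x c =
            pw (x 0) a * ∑ c ∈ s, wgt (fun n => x (n + 1)) c.tail := by
          rw [Finset.mul_sum]
          refine Finset.sum_congr rfl fun c hc => ?_
          conv_lhs => rw [hcons c hc]
          rfl
        have hinj : ∀ c ∈ s, ∀ c' ∈ s, c.tail = c'.tail → c = c' := by
          intro c hc c' hc' ht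
          rw [hcons c hc, hcons c' hc', ht]
        have step2 : ∑ c ∈ s, wgt (fun n => x (n + 1)) c.tail =
            ∑ t ∈ s.image List.tail, wgt (fun n => x (n + 1)) t :=
          (Finset.sum_image hinj).symm
        have hpc' : IsPrefixCode (↑(s.image List.tail) : Set (List A)) := by
          intro t1 ht1 t2 ht2 hpre
          simp only [Finset.coe_image, Set.mem_image, Finset.mem_coe] at ht1 ht2
          obtain ⟨c1, hc1, rfl⟩ := ht1
          obtain ⟨c2, hc2, rfl⟩ := ht2
          have h1 := hcons c1 hc1
          have h2 := hcons c2 hc2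
          have : c1 <+: c2 := by
            rw [h1, h2]
            exact List.cons_prefix_cons.mpr ⟨rfl, hpre⟩
          have hC1 : c1 ∈ C := (Finset.mem_filter.mp hc1).1
          have hC2 : c2 ∈ C := (Finset.mem_filter.mp hc2).1
          have := hpc c1 hC1 c2 hC2 this
          rw [this]
        have hlen' : ∀ t ∈ s.image List.tail, t.length ≤ n := by
          intro t ht
          obtain ⟨c, hc, rfl⟩ := Finset.mem_image.mp ht
          have hC : c ∈ C := (Finset.mem_filter.mp hc).1
          have := hlen c hC
          rw [hcons c hc] at this
          have h2 : c.tail.length + 1 ≤ n + 1 := by simpa using this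
          omega
        have := ih (fun n => x (n + 1)) (s.image List.tail) hpc' hlen'
        calc ∑ c ∈ s, wgt x c
            = pw (x 0) a * ∑ t ∈ s.image List.tail, wgt (fun n => x (n + 1)) t := by
              rw [step1, step2]
          _ ≤ pw (x 0) a * 1 := by
              exact mul_le_mul_of_nonneg_left this (pw_pos _ _).le
          _ = pw (x 0) a := mul_one _
      calc ∑ c ∈ C, wgt x c
          = ∑ a : A, ∑ c ∈ C.filter (fun c => c.headI = a), wgt x c :=
            (Finset.sum_fiberwise_of_maps_to (fun c _ => Finset.mem_univ c.headI) _).symm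
        _ ≤ ∑ a : A, pw (x 0) a := Finset.sum_le_sum fun a _ => key a
        _ = 1 := sum_pw _

end Aux

/-- For any finite non-maximal prefix code `C` and any `x ∈ A^ℕ`,
`∑_{c ∈ C} 2^{#{i : cᵢ ≠ xᵢ}} · (1/(2|A|−1))^{len(c)} < 1`. -/
theorem prefixCode_not_maximal_weighted_sum_lt_one [Fintype A] [Nonempty A] [DecidableEq A]
    (C : Finset (List A)) (hpc : IsPrefixCode (↑C : Set (List A))) (hnotmax : ¬ IsMaximalPrefixCode (↑C : Set (List A)))
    (x : ℕ → A) :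
    ∑ c ∈ C, (2 : ℝ) ^ (Finset.univ.filter fun i : Fin c.length =>
        c.get i ≠ x i.val).card *
      (1 / (2 * (Fintype.card A : ℝ) - 1)) ^ c.length < 1 := by
  -- find a word extending C
  rw [IsMaximalPrefixCode, not_and] at hnotmax
  have := hnotmax hpc
  push_neg at this
  obtain ⟨D, hD, hCD, hDne⟩ := this
  obtain ⟨w, hwD, hwC⟩ := Set.exists_of_ssubset (Set.ssubset_iff_subset_ne.mpr ⟨hCD, Ne.symm hDne⟩)
  have hwC' : w ∉ C := by simpa using hwC
  -- insert w C is a prefix code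
  have hpc' : IsPrefixCode (↑(insert w C) : Set (List A)) := by
    intro p hp q hq hpre
    apply hD p _ q _ hpre
    · rcases (by simpa using hp : p = w ∨ p ∈ C) with rfl | h
      · exact hwD
      · exact hCD h
    · rcases (by simpa using hq : q = w ∨ q ∈ C) with rfl | h
      · exact hwD
      · exact hCD h
  set n := (insert w C).sup List.length with hn
  have hlen : ∀ c ∈ insert w C, c.length ≤ n := fun c hc => Finset.le_sup hc
  have hk := kraft n x (insert w C) hpc' hlen
  rw [Finset.sum_insert hwC'] at hk
  have hsum : ∑ c ∈ C, (2 : ℝ) ^ (Finset.univ.filter fun i : Fin c.length =>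
        c.get i ≠ x i.val).card *
      (1 / (2 * (Fintype.card A : ℝ) - 1)) ^ c.length = ∑ c ∈ C, wgt x c :=
    Finset.sum_congr rfl fun c _ => (wgt_eq x c).symm
  rw [hsum]
  have := wgt_pos x w
  linarith
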